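/- Let g be a symmetric n×n real matrix, ζ ∈ ℝⁿ, and let W¹, W² ∈ ℝⁿ satisfy 1 + ζᵀW¹ > 0 and 1 + ζᵀW² > 0. Set Ω₁² = 1 + ζᵀW¹ and Ω₂² = 1 + ζᵀW². Then 1 + ζᵀ(W² + Ω₂² W¹) = Ω₁² Ω₂² > 0, and the composition law T(ζ, W², T(ζ, W¹, g)) = T(ζ, W² + Ω₂² W¹, g) holds. -/
import Mathlib


open Matrix

/-- The transformation `T(ζ, W, g) = Ω²·g − (gζ)Wᵀ − W(gζ)ᵀ − (λ/Ω²)·W Wᵀ`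
with `Ω² = 1 + ζᵀW` and `λ = −ζᵀgζ`. -/
noncomputable def ehlersT {n : ℕ} (ζ W : Fin n → ℝ) (g : Matrix (Fin n) (Fin n) ℝ) :
    Matrix (Fin n) (Fin n) ℝ :=
  (1 + ζ ⬝ᵥ W) • g - vecMulVec (g *ᵥ ζ) W - vecMulVec W (g *ᵥ ζ)
    - ((-(ζ ⬝ᵥ g *ᵥ ζ)) / (1 + ζ ⬝ᵥ W)) • vecMulVec W W

lemma vecMulVec_mulVec' {n : ℕ} (u v w : Fin n → ℝ) :
    vecMulVec u v *ᵥ w = (v ⬝ᵥ w) • u := by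
  ext i
  simp [mulVec, vecMulVec, dotProduct, Finset.mul_sum, mul_assoc, mul_comm, mul_left_comm]

lemma ehlersT_apply {n : ℕ} (ζ W : Fin n → ℝ) (g : Matrix (Fin n) (Fin n) ℝ) (i j : Fin n) :
    ehlersT ζ W g i j
      = (1 + ζ ⬝ᵥ W) * g i j - (g *ᵥ ζ) i * W j - W i * (g *ᵥ ζ) j
        - ((-(ζ ⬝ᵥ g *ᵥ ζ)) / (1 + ζ ⬝ᵥ W)) * (W i * W j) := by
  simp [ehlersT, vecMulVec_apply, Matrix.sub_apply, Matrix.smul_apply]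

lemma ehlersT_mulVec {n : ℕ} (ζ W : Fin n → ℝ) (g : Matrix (Fin n) (Fin n) ℝ)
    (hΩ : 1 + ζ ⬝ᵥ W ≠ 0) :
    ehlersT ζ W g *ᵥ ζ
      = g *ᵥ ζ - ((ζ ⬝ᵥ g *ᵥ ζ) / (1 + ζ ⬝ᵥ W)) • W := by
  unfold ehlersT
  rw [Matrix.sub_mulVec, Matrix.sub_mulVec, Matrix.sub_mulVec, Matrix.smul_mulVec,
    Matrix.smul_mulVec, vecMulVec_mulVec', vecMulVec_mulVec', vecMulVec_mulVec']
  have hWζ : W ⬝ᵥ ζ = ζ ⬝ᵥ W := dotProduct_comm W ζ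
  have hgζ : (g *ᵥ ζ) ⬝ᵥ ζ = ζ ⬝ᵥ g *ᵥ ζ := dotProduct_comm _ ζ
  rw [hWζ, hgζ]
  ext i
  simp only [Pi.sub_apply, Pi.smul_apply, smul_eq_mul]
  field_simp
  ring

lemma ehlersT_dot {n : ℕ} (ζ W : Fin n → ℝ) (g : Matrix (Fin n) (Fin n) ℝ)
    (hΩ : 1 + ζ ⬝ᵥ W ≠ 0) :
    ζ ⬝ᵥ ehlersT ζ W g *ᵥ ζ = (ζ ⬝ᵥ g *ᵥ ζ) / (1 + ζ ⬝ᵥ W) := by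
  rw [ehlersT_mulVec ζ W g hΩ, dotProduct_sub, dotProduct_smul, smul_eq_mul]
  field_simp
  ring

/-- **Composition law.** If `1 + ζᵀW¹ > 0` and `1 + ζᵀW² > 0` then
`1 + ζᵀ(W² + Ω₂² W¹) = Ω₁² Ω₂² > 0` and
`T(ζ, W², T(ζ, W¹, g)) = T(ζ, W² + Ω₂² W¹, g)`. -/
theorem ehlersT_comp (n : ℕ) (g : Matrix (Fin n) (Fin n) ℝ) (hg : g.IsSymm)
    (ζ W1 W2 : Fin n → ℝ)
    (h1 : 0 < 1 + ζ ⬝ᵥ W1) (h2 : 0 < 1 + ζ ⬝ᵥ W2) :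
    (1 + ζ ⬝ᵥ (W2 + (1 + ζ ⬝ᵥ W2) • W1)
        = (1 + ζ ⬝ᵥ W1) * (1 + ζ ⬝ᵥ W2)
      ∧ 0 < (1 + ζ ⬝ᵥ W1) * (1 + ζ ⬝ᵥ W2))
    ∧ ehlersT ζ W2 (ehlersT ζ W1 g)
        = ehlersT ζ (W2 + (1 + ζ ⬝ᵥ W2) • W1) g := by
  have hΩ1 : 1 + ζ ⬝ᵥ W1 ≠ 0 := ne_of_gt h1
  have hΩ2 : 1 + ζ ⬝ᵥ W2 ≠ 0 := ne_of_gt h2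
  have hdot : 1 + ζ ⬝ᵥ (W2 + (1 + ζ ⬝ᵥ W2) • W1)
      = (1 + ζ ⬝ᵥ W1) * (1 + ζ ⬝ᵥ W2) := by
    rw [dotProduct_add, dotProduct_smul, smul_eq_mul]
    ring
  refine ⟨⟨hdot, mul_pos h1 h2⟩, ?_⟩
  have hA := ehlersT_mulVec ζ W1 g hΩ1
  have hs := ehlersT_dot ζ W1 g hΩ1
  ext i j
  rw [ehlersT_apply ζ W2 (ehlersT ζ W1 g) i j, ehlersT_apply, ehlersT_apply,
    hA, dotProduct_sub, dotProduct_smul, hdot]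
  simp only [Pi.sub_apply, Pi.add_apply, Pi.smul_apply, smul_eq_mul]
  field_simp
  ring
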